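/- arXiv:1806.03165 — 5 statements merged into one kernel-verified Lean document; each statement's English description precedes it below -/
import Mathlib

section
/- Let C > 0 and let (u_k) be a nonnegative real sequence satisfying u_{k+1} ≤ -2C + 2C·√(1 + u_k/C) for all k ≥ 0. Then for all k ≥ 0, u_{k+1} ≤ max(8C, √(4C·u_0)) / (k+1). -/
theorem stmt_0 (C : ℝ) (hC : 0 < C) (u : ℕ → ℝ)
    (hnn : ∀ k, 0 ≤ u k)
    (hrec : ∀ k, u (k + 1) ≤ -2 * C + 2 * C * Real.sqrt (1 + u k / C)) :
    ∀ k : ℕ, u (k + 1) ≤ max (8 * C) (Real.sqrt (4 * C * u 0)) / (k + 1) := by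
  have hM8 : 8 * C ≤ max (8 * C) (Real.sqrt (4 * C * u 0)) := le_max_left _ _
  intro k
  induction k with
  | zero =>
    have h1 := hrec 0
    set s := Real.sqrt (1 + u 0 / C) with hs
    have hsnn : (0:ℝ) ≤ 1 + u 0 / C := by have := hnn 0; positivity
    have hs2 : s ^ 2 = 1 + u 0 / C := Real.sq_sqrt hsnn
    have hs1 : 1 ≤ s := by
      rw [show (1:ℝ) = Real.sqrt 1 from (Real.sqrt_one).symm]
      exact Real.sqrt_le_sqrt (by nlinarith [hnn 0, div_nonneg (hnn 0) hC.le])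
    have key : -2 * C + 2 * C * s ≤ Real.sqrt (4 * C * u 0) := by
      rw [show -2 * C + 2 * C * s = 2 * C * (s - 1) by ring]
      apply (Real.le_sqrt (by nlinarith) (by have := hnn 0; positivity)).mpr
      have hCs : C * s ^ 2 = C + u 0 := by
        rw [hs2]; field_simp
      nlinarith [hs1, hC, mul_nonneg (mul_pos hC hC).le (sub_nonneg.mpr hs1)]
    have : u (0 + 1) ≤ max (8 * C) (Real.sqrt (4 * C * u 0)) :=
      le_trans h1 (le_trans key (le_max_right _ _))
    simpa using this
  | succ k ih =>
    have hK : (1:ℝ) ≤ (k:ℝ) + 1 := by have := Nat.cast_nonneg (α := ℝ) k; linarith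
    set K : ℝ := (k:ℝ) + 1 with hKdef
    set M := max (8 * C) (Real.sqrt (4 * C * u 0)) with hMdef
    have hKpos : (0:ℝ) < K := by linarith
    have hih : u (k + 1) * K ≤ M := by
      have := ih
      rwa [le_div_iff₀ hKpos] at this
    have h1 := hrec (k + 1)
    set s := Real.sqrt (1 + u (k + 1) / C) with hs
    have hsnn : (0:ℝ) ≤ 1 + u (k + 1) / C := by have := hnn (k+1); positivity
    have hs2 : s ^ 2 = 1 + u (k + 1) / C := Real.sq_sqrt hsnn
    have hs1 : 1 ≤ s := by
      rw [show (1:ℝ) = Real.sqrt 1 from (Real.sqrt_one).symm]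
      exact Real.sqrt_le_sqrt (by nlinarith [hnn (k+1), div_nonneg (hnn (k+1)) hC.le])
    have hCs : C * s ^ 2 = C + u (k + 1) := by
      rw [hs2]; field_simp
    have hgoal : u (k + 1 + 1) * (K + 1) ≤ M := by
      have hu2 : u (k + 1 + 1) ≤ 2 * C * (s - 1) := by linarith
      rcases le_or_gt (K * (s - 1)) 2 with h | h
      · -- small case: u(k+2)*(K+1) ≤ 2C(s-1)(K+1) ≤ 4CK(s-1) ≤ 8C ≤ M
        nlinarith [hnn (k + 1 + 1), mul_nonneg (sub_nonneg.mpr hs1) (sub_nonneg.mpr hK),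
          mul_nonneg hC.le (mul_nonneg (sub_nonneg.mpr hs1) (sub_nonneg.mpr hK)),
          mul_le_mul_of_nonneg_left hu2 (le_of_lt (show (0:ℝ) < K + 1 by linarith))]
      · -- large case: M ≥ u(k+1)*K = C*K*(s-1)*(s+1) ≥ 2C(s-1)(K+1)
        have hx : (0:ℝ) < s - 1 := by nlinarith
        nlinarith [hnn (k + 1 + 1), mul_pos hC hx,
          mul_le_mul_of_nonneg_left hu2 (le_of_lt (show (0:ℝ) < K + 1 by linarith)),
          mul_le_mul_of_nonneg_left h.le (mul_pos hC hx).le]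
    have hcast : ((k:ℝ) + 1) + 1 = ((k + 1 : ℕ) : ℝ) + 1 := by push_cast; ring
    rw [show ((k + 1 : ℕ) : ℝ) + 1 = K + 1 by rw [hKdef]; push_cast; ring,
      le_div_iff₀ (by linarith : (0:ℝ) < K + 1)]
    exact hgoal
end

section
/- Let A be a positive semidefinite symmetric n×n real matrix. Then for all vectors x, y, z ∈ ℝⁿ, ⟨x - z, A z - A y⟩ ≤ (1/4)·(x - y)ᵀ A (x - y). -/
open Matrix

theorem stmt_1 (n : ℕ) (A : Matrix (Fin n) (Fin n) ℝ)
    (hA : A.PosSemidef) :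
    ∀ x y z : Fin n → ℝ,
      (x - z) ⬝ᵥ (A.mulVec z - A.mulVec y) ≤
        (1 / 4) * ((x - y) ⬝ᵥ A.mulVec (x - y)) := by
  intro x y z
  have hsym : ∀ a b : Fin n → ℝ, a ⬝ᵥ A.mulVec b = b ⬝ᵥ A.mulVec a := by
    intro a b
    have ht : Aᵀ = A := by have h := hA.1; simp at h; exact h
    rw [Matrix.dotProduct_mulVec]; nth_rw 1 [← ht]; rw [Matrix.vecMul_transpose,
      dotProduct_comm]
  have key := hA.dotProduct_mulVec_nonneg ((1/2 : ℝ) • (x + y) - z)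
  simp only [Matrix.mulVec_sub, Matrix.mulVec_smul, Matrix.mulVec_add,
    sub_dotProduct, dotProduct_sub, smul_dotProduct,
    dotProduct_smul, add_dotProduct, dotProduct_add,
    smul_eq_mul, star_trivial] at key ⊢
  have h1 := hsym x z
  have h2 := hsym y z
  have h3 := hsym x y
  nlinarith [key]
end

section
/- For λ > 0, B > 0, and w ∈ ℝ with w² ≠ 2λB, the minimizer of t ↦ (1/2)B t² + w t + λ·[t ≠ 0] over ℝ (where [t ≠ 0] equals 1 if t ≠ 0 and 0 otherwise) is t* = -w/B if w² > 2λB and t* = 0 if w² < 2λB. -/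
theorem stmt_10 (lam B w : ℝ) (hlam : 0 < lam) (hB : 0 < B)
    (hne : w ^ 2 ≠ 2 * lam * B) :
    ∀ t : ℝ,
      (1 / 2) * B * (if w ^ 2 > 2 * lam * B then -w / B else 0) ^ 2
        + w * (if w ^ 2 > 2 * lam * B then -w / B else 0)
        + (if (if w ^ 2 > 2 * lam * B then -w / B else 0) ≠ 0 then lam else 0)
      ≤ (1 / 2) * B * t ^ 2 + w * t + (if t ≠ 0 then lam else 0) := by
  intro t
  have hB' : B ≠ 0 := ne_of_gt hB
  by_cases hcase : w ^ 2 > 2 * lam * B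
  · have hw : w ≠ 0 := by
      intro h
      rw [h] at hcase
      nlinarith
    have hnz : -w / B ≠ 0 := by
      simp [hw, hB']
    simp only [if_pos hcase, if_pos hnz]
    have key : (1/2) * B * (-w/B)^2 + w * (-w/B) = -(w^2) / (2*B) := by
      field_simp; ring
    by_cases ht : t ≠ 0
    · simp only [if_pos ht]
      have h1 : 0 ≤ (1/2) * B * (t + w/B)^2 := by positivity
      have : (1/2) * B * (t + w/B)^2 = (1/2)*B*t^2 + w*t + w^2/(2*B) := by
        field_simp; ring
      rw [key]
      have hdiv : -w^2/(2*B) = -(w^2/(2*B)) := by ring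
      linarith [this, h1]
    · push_neg at ht
      subst ht
      rw [if_neg (by simp : ¬(0:ℝ) ≠ 0), key]
      have h3 : lam ≤ w^2/(2*B) := by
        rw [le_div_iff₀ (by linarith)]; nlinarith
      have hdiv : -w^2/(2*B) = -(w^2/(2*B)) := by ring
      nlinarith
  · simp only [if_neg hcase]
    push_neg at hcase
    have hlt : w ^ 2 < 2 * lam * B := lt_of_le_of_ne hcase hne
    by_cases ht : t ≠ 0
    · simp only [if_pos ht]
      have h1 : 0 ≤ (1/2) * B * (t + w/B)^2 := by positivity
      have h2 : (1/2) * B * (t + w/B)^2 = (1/2)*B*t^2 + w*t + w^2/(2*B) := by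
        field_simp; ring
      have h3 : w^2/(2*B) ≤ lam := by
        rw [div_le_iff₀ (by linarith)]; nlinarith
      simp only [ne_eq, neg_eq_zero]
      norm_num
      nlinarith
    · push_neg at ht
      simp [ht]
end

section
/- Let A = L + D + Lᵀ be a symmetric positive semidefinite n×n matrix with D its diagonal part (having positive diagonal entries) and L its strictly lower-triangular part. Let B = L + (1/ω)D + εI with ω ∈ (0,2) and ε ≥ 0, and set δ = (1/ω - 1/2)·min_i D_{ii} + ε. If δ > 0, then for all v ∈ ℝⁿ, vᵀBv ≥ δ‖v‖₂². -/
open Matrix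

theorem stmt_13 (n : ℕ) (hn : 0 < n)
    (A L D : Matrix (Fin n) (Fin n) ℝ)
    (hA : A.PosSemidef)
    (hsplit : A = L + D + Lᵀ)
    (hDdiag : ∀ i j, i ≠ j → D i j = 0)
    (hDpos : ∀ i, 0 < D i i)
    (hLlow : ∀ i j : Fin n, i ≤ j → L i j = 0)
    (ω ε : ℝ) (hω : ω ∈ Set.Ioo (0 : ℝ) 2) (hε : 0 ≤ ε)
    (B : Matrix (Fin n) (Fin n) ℝ)
    (hB : B = L + (1 / ω) • D + ε • (1 : Matrix (Fin n) (Fin n) ℝ))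
    (δ : ℝ)
    (hδ : δ = (1 / ω - 1 / 2) *
      Finset.univ.inf' (Finset.univ_nonempty_iff.mpr (Fin.pos_iff_nonempty.mp hn))
        (fun i => D i i) + ε)
    (hδpos : 0 < δ) :
    ∀ v : Fin n → ℝ, δ * (v ⬝ᵥ v) ≤ v ⬝ᵥ B.mulVec v := by
  intro v
  obtain ⟨hω0, hω2⟩ := hω
  set m : ℝ := Finset.univ.inf' (Finset.univ_nonempty_iff.mpr (Fin.pos_iff_nonempty.mp hn))
      (fun i => D i i) with hm
  -- symmetry trick
  have hsym : v ⬝ᵥ Lᵀ.mulVec v = v ⬝ᵥ L.mulVec v := by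
    rw [Matrix.mulVec_transpose, dotProduct_comm, ← Matrix.dotProduct_mulVec]
  -- positivity of A
  have hApos : 0 ≤ v ⬝ᵥ A.mulVec v := by
    have := hA.dotProduct_mulVec_nonneg v
    simpa using this
  have hAexp : v ⬝ᵥ A.mulVec v = 2 * (v ⬝ᵥ L.mulVec v) + v ⬝ᵥ D.mulVec v := by
    rw [hsplit, Matrix.add_mulVec, Matrix.add_mulVec, dotProduct_add,
      dotProduct_add, hsym]
    ring
  -- D quadratic form
  have hDexp : v ⬝ᵥ D.mulVec v = ∑ i, D i i * (v i * v i) := by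
    simp only [dotProduct, Matrix.mulVec, dotProduct]
    refine Finset.sum_congr rfl fun i _ => ?_
    have : ∑ j, D i j * v j = D i i * v i := by
      rw [Finset.sum_eq_single i]
      · intro j _ hj; rw [hDdiag i j (Ne.symm hj), zero_mul]
      · intro h; exact absurd (Finset.mem_univ i) h
    rw [this]; ring
  have hDge : m * (v ⬝ᵥ v) ≤ v ⬝ᵥ D.mulVec v := by
    rw [hDexp, dotProduct, Finset.mul_sum]
    refine Finset.sum_le_sum fun i _ => ?_
    have hmi : m ≤ D i i := Finset.inf'_le _ (Finset.mem_univ i)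
    nlinarith [mul_self_nonneg (v i), (hDpos i).le]
  have hvv : 0 ≤ v ⬝ᵥ v := Finset.sum_nonneg fun i _ => mul_self_nonneg (v i)
  have hBexp : v ⬝ᵥ B.mulVec v
      = v ⬝ᵥ L.mulVec v + (1 / ω) * (v ⬝ᵥ D.mulVec v) + ε * (v ⬝ᵥ v) := by
    rw [hB, Matrix.add_mulVec, Matrix.add_mulVec, dotProduct_add,
      dotProduct_add, Matrix.smul_mulVec, Matrix.smul_mulVec,
      dotProduct_smul, dotProduct_smul, Matrix.one_mulVec]
    simp [smul_eq_mul]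
  have hωhalf : (1 : ℝ) / 2 < 1 / ω := by
    apply one_div_lt_one_div_of_lt hω0 hω2 |>.trans_le (le_refl _) |> fun h => h
  rw [hδ, hBexp]
  nlinarith [hApos, hDge, hvv, mul_nonneg (sub_nonneg.mpr hωhalf.le) (sub_nonneg.mpr hDge)]
end

section
/- Let (u_k) be a nonnegative sequence and C₂, C₃ > 0 constants such that u_{k+1} ≤ C₂√(u_k - u_{k+1}) + C₃(u_k - u_{k+1}) and u_{k+1} ≤ u_k for all k. If for some k one has √(u_k - u_{k+1}) ≥ C₂/C₃, then u_{k+1} ≤ (2C₃/(2C₃+1))·u_k. -/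
theorem stmt_14 (u : ℕ → ℝ) (C₂ C₃ : ℝ) (hC₂ : 0 < C₂) (hC₃ : 0 < C₃)
    (hnn : ∀ k, 0 ≤ u k)
    (hmono : ∀ k, u (k + 1) ≤ u k)
    (hrec : ∀ k, u (k + 1) ≤ C₂ * Real.sqrt (u k - u (k + 1)) + C₃ * (u k - u (k + 1)))
    (k : ℕ) (hk : C₂ / C₃ ≤ Real.sqrt (u k - u (k + 1))) :
    u (k + 1) ≤ (2 * C₃ / (2 * C₃ + 1)) * u k := by
  set d := u k - u (k + 1) with hd
  have hd0 : 0 ≤ d := by simp [hd]; linarith [hmono k]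
  have hs : Real.sqrt d * Real.sqrt d = d := Real.mul_self_sqrt hd0
  have h1 : C₂ ≤ C₃ * Real.sqrt d := by
    rw [div_le_iff₀ hC₃] at hk; linarith
  have h2 : C₂ * Real.sqrt d ≤ C₃ * d := by
    have := mul_le_mul_of_nonneg_right h1 (Real.sqrt_nonneg d)
    nlinarith
  have h3 : u (k + 1) ≤ 2 * C₃ * d := by
    have h := hrec k; rw [← hd] at h; linarith
  rw [div_mul_eq_mul_div, le_div_iff₀ (by linarith)]
  nlinarith
end
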